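/- Let W be a 5-dimensional linear subspace of ℝ⁷. Then W contains a 3-dimensional linear subspace that is closed under the cross product determined by φ₀, and moreover W_I^{⊥,2} = {0}; in particular W is Type-I 2-coisotropic. -/

import Mathlib

open Module

/-- The exterior 3-form `dxᵃ ∧ dxᵇ ∧ dxᶜ` on `ℝ⁷`. -/
noncomputable def dx3 (a b c : Fin 7) : (Fin 7 → ℝ) [⋀^Fin 3]→ₗ[ℝ] ℝ :=
  (Matrix.detRowAlternating : (Fin 3 → ℝ) [⋀^Fin 3]→ₗ[ℝ] ℝ).compLinearMap
    (LinearMap.funLeft ℝ ℝ ![a, b, c])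

/-- The standard `G₂` 3-form
`φ₀ = dx¹²³ + dx¹⁴⁵ + dx¹⁶⁷ + dx²⁴⁶ − dx²⁵⁷ − dx³⁴⁷ − dx³⁵⁶` on `ℝ⁷`
(with indices shifted to `0, …, 6`). -/
noncomputable def phi0 : (Fin 7 → ℝ) [⋀^Fin 3]→ₗ[ℝ] ℝ :=
  dx3 0 1 2 + dx3 0 3 4 + dx3 0 5 6 + dx3 1 3 5 - dx3 1 4 6 - dx3 2 3 6 - dx3 2 4 5

/-- The Type-I 1st orthogonal complement of `W ⊆ ℝ⁷` with respect to `φ₀`. -/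
def WIperp1 (W : Submodule ℝ (Fin 7 → ℝ)) : Set (Fin 7 → ℝ) :=
  {v | ∀ w ∈ W, ∀ u : Fin 7 → ℝ, phi0 ![v, w, u] = 0}

/-- The Type-I 2nd orthogonal complement of `W ⊆ ℝ⁷` with respect to `φ₀`. -/
def WIperp2 (W : Submodule ℝ (Fin 7 → ℝ)) : Set (Fin 7 → ℝ) :=
  {v | ∀ w₁ ∈ W, ∀ w₂ ∈ W, phi0 ![v, w₁, w₂] = 0}

/-- `U` is closed under the cross product determined by `φ₀`: for all `u, v ∈ U`
and every `z` orthogonal to `U` (w.r.t. the standard inner product),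
`φ₀ (u, v, z) = 0`, i.e. `u × v ∈ U`. -/
def CrossClosed (U : Submodule ℝ (Fin 7 → ℝ)) : Prop :=
  ∀ u ∈ U, ∀ v ∈ U, ∀ z : Fin 7 → ℝ, (∀ x ∈ U, ∑ i, z i * x i = 0) → phi0 ![u, v, z] = 0

/-! ### Auxiliary: explicit cross product and dot product on `ℝ⁷` -/

/-- The cross product on `ℝ⁷` determined by `φ₀`. -/
def cross (u v : Fin 7 → ℝ) : Fin 7 → ℝ :=
  ![u 1 * v 2 - u 2 * v 1 + u 3 * v 4 - u 4 * v 3 + u 5 * v 6 - u 6 * v 5,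
    -(u 0 * v 2) + u 2 * v 0 + u 3 * v 5 - u 4 * v 6 - u 5 * v 3 + u 6 * v 4,
    u 0 * v 1 - u 1 * v 0 - u 3 * v 6 - u 4 * v 5 + u 5 * v 4 + u 6 * v 3,
    -(u 0 * v 4) - u 1 * v 5 + u 2 * v 6 + u 4 * v 0 + u 5 * v 1 - u 6 * v 2,
    u 0 * v 3 + u 1 * v 6 + u 2 * v 5 - u 3 * v 0 - u 5 * v 2 - u 6 * v 1,
    -(u 0 * v 6) + u 1 * v 3 - u 2 * v 4 - u 3 * v 1 + u 4 * v 2 + u 6 * v 0,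
    u 0 * v 5 - u 1 * v 4 - u 2 * v 3 + u 3 * v 2 + u 4 * v 1 - u 5 * v 0]

/-- The standard dot product on `ℝ⁷`. -/
def dot (u v : Fin 7 → ℝ) : ℝ := ∑ i, u i * v i

theorem ext7 {x y : Fin 7 → ℝ} (h0 : x 0 = y 0) (h1 : x 1 = y 1) (h2 : x 2 = y 2)
    (h3 : x 3 = y 3) (h4 : x 4 = y 4) (h5 : x 5 = y 5) (h6 : x 6 = y 6) : x = y := by
  funext i
  fin_cases i
  exacts [h0, h1, h2, h3, h4, h5, h6]

theorem cross_apply_0 (u v : Fin 7 → ℝ) : cross u v 0 = u 1 * v 2 - u 2 * v 1 + u 3 * v 4 - u 4 * v 3 + u 5 * v 6 - u 6 * v 5 := rfl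
theorem cross_apply_1 (u v : Fin 7 → ℝ) : cross u v 1 = -(u 0 * v 2) + u 2 * v 0 + u 3 * v 5 - u 4 * v 6 - u 5 * v 3 + u 6 * v 4 := rfl
theorem cross_apply_2 (u v : Fin 7 → ℝ) : cross u v 2 = u 0 * v 1 - u 1 * v 0 - u 3 * v 6 - u 4 * v 5 + u 5 * v 4 + u 6 * v 3 := rfl
theorem cross_apply_3 (u v : Fin 7 → ℝ) : cross u v 3 = -(u 0 * v 4) - u 1 * v 5 + u 2 * v 6 + u 4 * v 0 + u 5 * v 1 - u 6 * v 2 := rfl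
theorem cross_apply_4 (u v : Fin 7 → ℝ) : cross u v 4 = u 0 * v 3 + u 1 * v 6 + u 2 * v 5 - u 3 * v 0 - u 5 * v 2 - u 6 * v 1 := rfl
theorem cross_apply_5 (u v : Fin 7 → ℝ) : cross u v 5 = -(u 0 * v 6) + u 1 * v 3 - u 2 * v 4 - u 3 * v 1 + u 4 * v 2 + u 6 * v 0 := rfl
theorem cross_apply_6 (u v : Fin 7 → ℝ) : cross u v 6 = u 0 * v 5 - u 1 * v 4 - u 2 * v 3 + u 3 * v 2 + u 4 * v 1 - u 5 * v 0 := rfl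

theorem dx3_apply (a b c : Fin 7) (u v w : Fin 7 → ℝ) :
    dx3 a b c ![u, v, w] =
      u a * (v b * w c - v c * w b) - u b * (v a * w c - v c * w a)
        + u c * (v a * w b - v b * w a) := by
  show Matrix.det (Matrix.of fun i j => (![u, v, w] i) (![a, b, c] j)) = _
  rw [Matrix.det_fin_three]
  simp [Matrix.of_apply]
  ring

theorem phi0_apply (u v w : Fin 7 → ℝ) : phi0 ![u, v, w] = dot (cross u v) w := by
  simp only [phi0, AlternatingMap.sub_apply, AlternatingMap.add_apply, dx3_apply, dot,
    Fin.sum_univ_seven, cross_apply_0, cross_apply_1, cross_apply_2, cross_apply_3,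
    cross_apply_4, cross_apply_5, cross_apply_6]
  ring

theorem cross_add_left (u u' v : Fin 7 → ℝ) : cross (u + u') v = cross u v + cross u' v := by
  apply ext7 <;>
    simp only [Pi.add_apply, cross_apply_0, cross_apply_1, cross_apply_2, cross_apply_3,
      cross_apply_4, cross_apply_5, cross_apply_6] <;> ring

theorem cross_add_right (u v v' : Fin 7 → ℝ) : cross u (v + v') = cross u v + cross u v' := by
  apply ext7 <;>
    simp only [Pi.add_apply, cross_apply_0, cross_apply_1, cross_apply_2, cross_apply_3,
      cross_apply_4, cross_apply_5, cross_apply_6] <;> ring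

theorem cross_smul_left (r : ℝ) (u v : Fin 7 → ℝ) : cross (r • u) v = r • cross u v := by
  apply ext7 <;>
    simp only [Pi.smul_apply, smul_eq_mul, cross_apply_0, cross_apply_1, cross_apply_2,
      cross_apply_3, cross_apply_4, cross_apply_5, cross_apply_6] <;> ring

theorem cross_smul_right (r : ℝ) (u v : Fin 7 → ℝ) : cross u (r • v) = r • cross u v := by
  apply ext7 <;>
    simp only [Pi.smul_apply, smul_eq_mul, cross_apply_0, cross_apply_1, cross_apply_2,
      cross_apply_3, cross_apply_4, cross_apply_5, cross_apply_6] <;> ring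

theorem cross_antisymm (u v : Fin 7 → ℝ) : cross v u = -cross u v := by
  apply ext7 <;>
    simp only [Pi.neg_apply, cross_apply_0, cross_apply_1, cross_apply_2, cross_apply_3,
      cross_apply_4, cross_apply_5, cross_apply_6] <;> ring

theorem cross_self7 (u : Fin 7 → ℝ) : cross u u = 0 := by
  apply ext7 <;>
    simp only [Pi.zero_apply, cross_apply_0, cross_apply_1, cross_apply_2, cross_apply_3,
      cross_apply_4, cross_apply_5, cross_apply_6] <;> ring

theorem cross_zero_left (v : Fin 7 → ℝ) : cross 0 v = 0 := by
  apply ext7 <;>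
    simp only [Pi.zero_apply, cross_apply_0, cross_apply_1, cross_apply_2, cross_apply_3,
      cross_apply_4, cross_apply_5, cross_apply_6] <;> ring

theorem cross_zero_right (v : Fin 7 → ℝ) : cross v 0 = 0 := by
  rw [cross_antisymm, cross_zero_left, neg_zero]

theorem cross_neg_right (u v : Fin 7 → ℝ) : cross u (-v) = -cross u v := by
  apply ext7 <;>
    simp only [Pi.neg_apply, cross_apply_0, cross_apply_1, cross_apply_2, cross_apply_3,
      cross_apply_4, cross_apply_5, cross_apply_6] <;> ring

theorem triple (u v : Fin 7 → ℝ) : cross u (cross u v) = dot u v • u - dot u u • v := by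
  apply ext7 <;>
    simp only [Pi.sub_apply, Pi.smul_apply, smul_eq_mul, dot, Fin.sum_univ_seven,
      cross_apply_0, cross_apply_1, cross_apply_2, cross_apply_3,
      cross_apply_4, cross_apply_5, cross_apply_6] <;> ring

theorem dot_comm (u v : Fin 7 → ℝ) : dot u v = dot v u := by
  simp only [dot, Fin.sum_univ_seven] ; ring

theorem dot_cross_left (u v : Fin 7 → ℝ) : dot (cross u v) u = 0 := by
  simp only [dot, Fin.sum_univ_seven, cross_apply_0, cross_apply_1, cross_apply_2,
    cross_apply_3, cross_apply_4, cross_apply_5, cross_apply_6] ; ring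

theorem dot_cross_right (u v : Fin 7 → ℝ) : dot (cross u v) v = 0 := by
  simp only [dot, Fin.sum_univ_seven, cross_apply_0, cross_apply_1, cross_apply_2,
    cross_apply_3, cross_apply_4, cross_apply_5, cross_apply_6] ; ring

theorem dot_cross_cyclic (u v w : Fin 7 → ℝ) : dot (cross u v) w = dot (cross w u) v := by
  simp only [dot, Fin.sum_univ_seven, cross_apply_0, cross_apply_1, cross_apply_2,
    cross_apply_3, cross_apply_4, cross_apply_5, cross_apply_6] ; ring

theorem dot_cross_norm (u v : Fin 7 → ℝ) :
    dot (cross u v) (cross u v) = dot u u * dot v v - dot u v * dot u v := by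
  simp only [dot, Fin.sum_univ_seven, cross_apply_0, cross_apply_1, cross_apply_2,
    cross_apply_3, cross_apply_4, cross_apply_5, cross_apply_6] ; ring

theorem dot_add_left (u u' v : Fin 7 → ℝ) : dot (u + u') v = dot u v + dot u' v := by
  simp only [dot, Pi.add_apply, Fin.sum_univ_seven] ; ring

theorem dot_smul_left (r : ℝ) (u v : Fin 7 → ℝ) : dot (r • u) v = r * dot u v := by
  simp only [dot, Pi.smul_apply, smul_eq_mul, Fin.sum_univ_seven] ; ring

theorem dot_sub_left (u u' v : Fin 7 → ℝ) : dot (u - u') v = dot u v - dot u' v := by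
  simp only [dot, Pi.sub_apply, Fin.sum_univ_seven] ; ring

theorem dot_neg_left (u v : Fin 7 → ℝ) : dot (-u) v = -dot u v := by
  simp only [dot, Pi.neg_apply, Fin.sum_univ_seven] ; ring

theorem dot_zero_left (v : Fin 7 → ℝ) : dot 0 v = 0 := by simp [dot]

theorem dot_self_nonneg (v : Fin 7 → ℝ) : 0 ≤ dot v v :=
  Finset.sum_nonneg fun i _ => mul_self_nonneg _

theorem dot_self_eq_zero {v : Fin 7 → ℝ} (h : dot v v = 0) : v = 0 := by
  funext i
  have h1 := (Finset.sum_eq_zero_iff_of_nonneg (fun j _ => mul_self_nonneg (v j))).1 h i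
    (Finset.mem_univ i)
  simpa using mul_self_eq_zero.1 h1

theorem dot_self_pos {v : Fin 7 → ℝ} (h : v ≠ 0) : 0 < dot v v := by
  rcases lt_or_eq_of_le (dot_self_nonneg v) with h' | h'
  · exact h'
  · exact absurd (dot_self_eq_zero h'.symm) h

/-- The dot product as a bilinear form on `ℝ⁷`. -/
def dotB : LinearMap.BilinForm ℝ (Fin 7 → ℝ) :=
  LinearMap.mk₂ ℝ dot dot_add_left
    (fun r u v => by rw [dot_smul_left, smul_eq_mul])
    (fun u v v' => by rw [dot_comm, dot_add_left, dot_comm v, dot_comm v'])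
    (fun r u v => by rw [dot_comm, dot_smul_left, dot_comm, smul_eq_mul])

theorem dotB_apply (u v : Fin 7 → ℝ) : dotB u v = dot u v := rfl

theorem dotB_refl : dotB.IsRefl := fun u v h => by
  rw [dotB_apply, dot_comm] ; exact h

theorem dotB_nondeg : dotB.Nondegenerate := ⟨fun u h =>
  dot_self_eq_zero (by simpa [dotB_apply] using h u), fun u h =>
  dot_self_eq_zero (by simpa [dotB_apply] using h u)⟩

theorem schwarz_aux (a b : Fin 7 → ℝ) :
    dot (dot a a • b - dot a b • a) (dot a a • b - dot a b • a)
      = dot a a * (dot a a * dot b b - dot a b * dot a b) := by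
  simp only [dot, Pi.sub_apply, Pi.smul_apply, smul_eq_mul, Fin.sum_univ_seven] ; ring

theorem schwarz_pos {a b : Fin 7 → ℝ} (ha : a ≠ 0) (hb : b ∉ Submodule.span ℝ {a}) :
    0 < dot a a * dot b b - dot a b * dot a b := by
  have haa := dot_self_pos ha
  have hp : (dot a a • b - dot a b • a) ≠ 0 := by
    intro h
    apply hb
    have h1 : dot a a • b = dot a b • a := by rwa [sub_eq_zero] at h
    have h2 : b = ((dot a a)⁻¹ * dot a b) • a := by
      rw [mul_smul, ← h1, ← mul_smul, inv_mul_cancel₀ (ne_of_gt haa), one_smul]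
    rw [h2]
    exact Submodule.smul_mem _ _ (Submodule.mem_span_singleton_self a)
  have hpp := dot_self_pos hp
  rw [schwarz_aux] at hpp
  nlinarith

/-- every 5-dimensional subspace `W` of `ℝ⁷` contains a 3-dimensional
subspace closed under the cross product determined by `φ₀`, and `W_I^{⊥,2} = {0}`;
in particular `W` is Type-I 2-coisotropic. -/
theorem g2_dim_five_coisotropic (W : Submodule ℝ (Fin 7 → ℝ))
    (hW : Module.finrank ℝ W = 5) :
    (∃ U : Submodule ℝ (Fin 7 → ℝ), U ≤ W ∧ Module.finrank ℝ U = 3 ∧ CrossClosed U) ∧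
    WIperp2 W = {0} ∧ WIperp2 W ⊆ (W : Set (Fin 7 → ℝ)) := by
  have hV7 : finrank ℝ (Fin 7 → ℝ) = 7 := Module.finrank_fin_fun (R := ℝ)
  set Wo := dotB.orthogonal W with hWo_def
  have hWo2 : finrank ℝ Wo = 2 := by
    rw [hWo_def, LinearMap.BilinForm.finrank_orthogonal dotB_nondeg, hV7, hW]
  have hWoW : dotB.orthogonal Wo = W :=
    LinearMap.BilinForm.orthogonal_orthogonal dotB_nondeg dotB_refl W
  obtain ⟨a, haWo, ha0⟩ := Submodule.exists_mem_ne_zero_of_ne_bot (p := Wo)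
    (by intro h; rw [h, finrank_bot] at hWo2; omega)
  have hnotle : ¬ (Wo ≤ Submodule.span ℝ {a}) := by
    intro hle
    have h1 : finrank ℝ Wo ≤ finrank ℝ (Submodule.span ℝ {a}) := Submodule.finrank_mono hle
    rw [hWo2, finrank_span_singleton ha0] at h1
    omega
  obtain ⟨b, hbWo, hbnot⟩ := SetLike.not_le_iff_exists.1 hnotle
  have hab_indep : LinearIndependent ℝ ![b, a] := by
    rw [linearIndependent_fin2]
    constructor
    · simpa using ha0
    · intro r hr
      simp only [Matrix.cons_val_one, Matrix.head_cons, Matrix.cons_val_zero] at hr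
      exact hbnot (hr ▸ Submodule.smul_mem _ _ (Submodule.mem_span_singleton_self a))
  have hspan : Submodule.span ℝ (Set.range ![b, a]) = Wo := by
    apply Submodule.eq_of_le_of_finrank_le
    · rw [Submodule.span_le]
      rintro x ⟨i, rfl⟩
      fin_cases i
      · exact hbWo
      · exact haWo
    · rw [finrank_span_eq_card hab_indep, hWo2]
      simp
  have haW : ∀ x, x ∈ W → dot a x = 0 := fun x hx => by
    rw [dot_comm]; exact haWo x hx
  have hbW : ∀ x, x ∈ W → dot b x = 0 := fun x hx => by
    rw [dot_comm]; exact hbWo x hx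
  have memW : ∀ x : Fin 7 → ℝ, dot a x = 0 → dot b x = 0 → x ∈ W := by
    intro x hax hbx
    rw [← hWoW, LinearMap.BilinForm.mem_orthogonal_iff]
    intro n hn
    rw [← hspan] at hn
    induction hn using Submodule.span_induction with
    | mem y hy =>
        obtain ⟨i, rfl⟩ := hy
        fin_cases i
        · exact hbx
        · exact hax
    | zero => exact dot_zero_left x
    | add y z _ _ hy hz =>
        show dot (y + z) x = 0
        rw [dot_add_left, show dot y x = 0 from hy, show dot z x = 0 from hz, add_zero]
    | smul r y _ hy =>
        show dot (r • y) x = 0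
        rw [dot_smul_left, show dot y x = 0 from hy, mul_zero]
  set c := cross a b with hc_def
  have hcW : c ∈ W := by
    apply memW
    · rw [dot_comm, hc_def]; exact dot_cross_left a b
    · rw [dot_comm, hc_def]; exact dot_cross_right a b
  have hcc_pos : 0 < dot c c := by
    rw [hc_def, dot_cross_norm]
    exact schwarz_pos ha0 hbnot
  have hc0 : c ≠ 0 := fun h => by rw [h] at hcc_pos; simp [dot_zero_left] at hcc_pos
  have hKfin : finrank ℝ (dotB.orthogonal (Submodule.span ℝ {c})) = 6 := by
    rw [LinearMap.BilinForm.finrank_orthogonal dotB_nondeg, hV7,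
      finrank_span_singleton hc0]
  have hinf_pos : (W ⊓ dotB.orthogonal (Submodule.span ℝ {c})) ≠ ⊥ := by
    intro h
    have h1 := Submodule.finrank_sup_add_finrank_inf_eq W
      (dotB.orthogonal (Submodule.span ℝ {c}))
    have h2 : finrank ℝ ↥(W ⊔ dotB.orthogonal (Submodule.span ℝ {c})) ≤ 7 :=
      le_trans (Submodule.finrank_le _) (le_of_eq hV7)
    rw [h, finrank_bot, hW, hKfin] at h1
    omega
  obtain ⟨u, huWK, hu0⟩ := Submodule.exists_mem_ne_zero_of_ne_bot hinf_pos
  obtain ⟨huW, huK⟩ := Submodule.mem_inf.1 huWK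
  have hcu : dot c u = 0 := huK c (Submodule.mem_span_singleton_self c)
  set d := cross c u with hd_def
  have huu_pos : 0 < dot u u := dot_self_pos hu0
  have hdd_pos : 0 < dot d d := by
    rw [hd_def, dot_cross_norm, hcu, mul_zero, sub_zero]
    exact mul_pos hcc_pos huu_pos
  have hd0 : d ≠ 0 := fun h => by rw [h] at hdd_pos; simp [dot_zero_left] at hdd_pos
  have hdW : d ∈ W := by
    apply memW
    · rw [dot_comm, hd_def, dot_cross_cyclic, hc_def, triple, dot_sub_left,
        dot_smul_left, dot_smul_left, haW u huW, hbW u huW]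
      ring
    · rw [dot_comm, hd_def, dot_cross_cyclic, hc_def, cross_antisymm b a,
        cross_neg_right, triple, dot_neg_left, dot_sub_left,
        dot_smul_left, dot_smul_left, hbW u huW, haW u huW]
      ring
  set U' := Submodule.span ℝ (Set.range ![c, u, d]) with hU'_def
  have hUc : c ∈ U' := Submodule.subset_span ⟨0, rfl⟩
  have hUu : u ∈ U' := Submodule.subset_span ⟨1, rfl⟩
  have hUd : d ∈ U' := Submodule.subset_span ⟨2, rfl⟩
  have hcd : cross c d ∈ U' := by
    rw [hd_def, triple]
    exact sub_mem (Submodule.smul_mem _ _ hUc) (Submodule.smul_mem _ _ hUu)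
  have hud : cross u d ∈ U' := by
    rw [hd_def, cross_antisymm u c, cross_neg_right, triple]
    exact neg_mem (sub_mem (Submodule.smul_mem _ _ hUu) (Submodule.smul_mem _ _ hUc))
  have hgen : ∀ i j : Fin 3, cross (![c, u, d] i) (![c, u, d] j) ∈ U' := by
    intro i j
    fin_cases i <;> fin_cases j
    exacts [by rw [cross_self7]; exact zero_mem _,
            hd_def ▸ hUd,
            hcd,
            by rw [cross_antisymm]; exact neg_mem (hd_def ▸ hUd),
            by rw [cross_self7]; exact zero_mem _,
            hud,
            by rw [cross_antisymm]; exact neg_mem hcd,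
            by rw [cross_antisymm]; exact neg_mem hud,
            by rw [cross_self7]; exact zero_mem _]
  have hcross_mem : ∀ p' q', p' ∈ U' → q' ∈ U' → cross p' q' ∈ U' := by
    intro p' q' hp' hq'
    induction hp', hq' using Submodule.span_induction₂ with
    | mem_mem x y hx hy =>
        obtain ⟨i, rfl⟩ := hx; obtain ⟨j, rfl⟩ := hy; exact hgen i j
    | zero_left y hy => rw [cross_zero_left]; exact zero_mem _
    | zero_right x hx => rw [cross_zero_right]; exact zero_mem _
    | add_left x y zz hx hy hz h1 h2 => rw [cross_add_left]; exact add_mem h1 h2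
    | add_right x y zz hx hy hz h1 h2 => rw [cross_add_right]; exact add_mem h1 h2
    | smul_left r x y hx hy h1 => rw [cross_smul_left]; exact Submodule.smul_mem _ _ h1
    | smul_right r x y hx hy h1 => rw [cross_smul_right]; exact Submodule.smul_mem _ _ h1
  have hperp : WIperp2 W = {0} := by
    ext v
    simp only [Set.mem_singleton_iff]
    constructor
    · intro hv
      by_contra hv0
      have hvv_pos : 0 < dot v v := dot_self_pos hv0
      let Lfull : (Fin 7 → ℝ) →ₗ[ℝ] (Fin 7 → ℝ) :=
        { toFun := fun w => cross v w
          map_add' := cross_add_right v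
          map_smul' := fun r w => cross_smul_right r v w }
      let L : W →ₗ[ℝ] (Fin 7 → ℝ) := Lfull.comp W.subtype
      have hrange : LinearMap.range L ≤ Wo := by
        rintro _ ⟨w, rfl⟩
        rw [hWo_def, LinearMap.BilinForm.mem_orthogonal_iff]
        intro n hn
        show dot n (cross v (w : Fin 7 → ℝ)) = 0
        rw [dot_comm]
        have h1 := hv (w : Fin 7 → ℝ) w.2 n hn
        rwa [phi0_apply] at h1
      have hker : finrank ℝ (LinearMap.ker L) ≤ 1 := by
        have hmap : (LinearMap.ker L).map W.subtype ≤ Submodule.span ℝ {v} := by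
          rintro _ ⟨w, hw, rfl⟩
          have hcvw : cross v (w : Fin 7 → ℝ) = 0 := LinearMap.mem_ker.1 hw
          have h3 := triple v (w : Fin 7 → ℝ)
          rw [hcvw, cross_zero_right] at h3
          have h5 : dot v (w : Fin 7 → ℝ) • v = dot v v • (w : Fin 7 → ℝ) :=
            sub_eq_zero.mp h3.symm
          have h4 : (w : Fin 7 → ℝ) = ((dot v v)⁻¹ * dot v w) • v := by
            rw [mul_smul, h5, ← mul_smul, inv_mul_cancel₀ (ne_of_gt hvv_pos), one_smul]
          show (w : Fin 7 → ℝ) ∈ Submodule.span ℝ {v}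
          rw [h4]
          exact Submodule.smul_mem _ _ (Submodule.mem_span_singleton_self v)
        calc finrank ℝ (LinearMap.ker L)
            = finrank ℝ ((LinearMap.ker L).map W.subtype) :=
              (Submodule.finrank_map_subtype_eq W _).symm
          _ ≤ finrank ℝ (Submodule.span ℝ {v}) := Submodule.finrank_mono hmap
          _ ≤ 1 := le_of_eq (finrank_span_singleton hv0)
      have hrk := LinearMap.finrank_range_add_finrank_ker L
      have hrle : finrank ℝ (LinearMap.range L) ≤ 2 :=
        hWo2 ▸ Submodule.finrank_mono hrange
      rw [hW] at hrk
      omega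
    · rintro rfl
      intro w₁ _ w₂ _
      rw [phi0_apply, cross_zero_left, dot_zero_left]
  refine ⟨⟨U', ?_, ?_, ?_⟩, hperp, ?_⟩
  · rw [hU'_def, Submodule.span_le]
    rintro x ⟨i, rfl⟩
    fin_cases i
    exacts [hcW, huW, hdW]
  · have hindep : LinearIndependent ℝ ![c, u, d] := by
      apply LinearMap.BilinForm.linearIndependent_of_iIsOrtho (B := dotB)
      · rw [LinearMap.BilinForm.iIsOrtho_def]
        intro i j hij
        have h1 : dot c u = 0 := hcu
        have h2 : dot c d = 0 := by rw [dot_comm, hd_def]; exact dot_cross_left c u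
        have h3 : dot u c = 0 := by rw [dot_comm]; exact hcu
        have h4 : dot u d = 0 := by rw [dot_comm, hd_def]; exact dot_cross_right c u
        have h5 : dot d c = 0 := by rw [hd_def]; exact dot_cross_left c u
        have h6 : dot d u = 0 := by rw [hd_def]; exact dot_cross_right c u
        fin_cases i <;> fin_cases j <;>
          first
          | exact absurd rfl hij
          | exact h1
          | exact h2
          | exact h3
          | exact h4
          | exact h5
          | exact h6
      · intro i
        fin_cases i
        · exact fun h => absurd (h : dot c c = 0) (ne_of_gt hcc_pos)
        · exact fun h => absurd (h : dot u u = 0) (ne_of_gt huu_pos)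
        · exact fun h => absurd (h : dot d d = 0) (ne_of_gt hdd_pos)
    rw [hU'_def, finrank_span_eq_card hindep]
    simp
  · intro p hp q hq z hz
    rw [phi0_apply, dot_comm]
    exact hz _ (hcross_mem p q hp hq)
  · rw [hperp]
    intro x hx
    rw [Set.mem_singleton_iff] at hx
    rw [hx]
    exact W.zero_mem
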